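/- Let W : (0,∞) → ℝ be measurable with s ↦ |W(s)| s² locally integrable on [0,∞), and set g_W(t) := t^{−2} ∫₀^t W(s) s² ds for t > 0. Then for every smooth compactly supported φ : ℝ³ → ℂ² such that x ↦ W(|x|)|φ(x)|² is integrable, one has ∫_{ℝ³} W(|x|)|φ(x)|² dx = −2 Re ∫_{ℝ³} g_W(|x|) ⟨((x/|x|)·∇φ)(x), φ(x)⟩ dx, where a·∇φ := Σ_{j=1}^{3} aⱼ ∂φ/∂xⱼ and ⟨·,·⟩ is the Hermitian inner product on ℂ². -/

import Mathlib

open MeasureTheory Real Set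
open scoped ENNReal NNReal

noncomputable section

abbrev R3 : Type := EuclideanSpace ℝ (Fin 3)
abbrev C2 : Type := EuclideanSpace ℂ (Fin 2)

/-- The Pauli matrices σ₁, σ₂, σ₃. -/
def pauli : Fin 3 → Matrix (Fin 2) (Fin 2) ℂ :=
  ![!![0, 1; 1, 0], !![0, -Complex.I; Complex.I, 0], !![1, 0; 0, -1]]

/-- Action of a 2×2 complex matrix on ℂ². -/
def matVec (A : Matrix (Fin 2) (Fin 2) ℂ) (v : C2) : C2 :=
  (EuclideanSpace.equiv (Fin 2) ℂ).symm (A.mulVec (EuclideanSpace.equiv (Fin 2) ℂ v))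

/-- The partial derivative ∂φ/∂xⱼ. -/
def pderiv (φ : R3 → C2) (j : Fin 3) (x : R3) : C2 :=
  fderiv ℝ φ x (EuclideanSpace.single j (1 : ℝ))

/-- (σ·∇φ)(x) = Σⱼ σⱼ ∂φ/∂xⱼ(x). -/
def sigmaGrad (φ : R3 → C2) (x : R3) : C2 :=
  ∑ j : Fin 3, matVec (pauli j) (pderiv φ j x)

/-- The cross product x × ∇φ(x), componentwise. -/
def crossGrad (φ : R3 → C2) (x : R3) : Fin 3 → C2 :=
  ![(x 1 : ℂ) • pderiv φ 2 x - (x 2 : ℂ) • pderiv φ 1 x,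
    (x 2 : ℂ) • pderiv φ 0 x - (x 0 : ℂ) • pderiv φ 2 x,
    (x 0 : ℂ) • pderiv φ 1 x - (x 1 : ℂ) • pderiv φ 0 x]

/-- (σ·Lφ)(x) = −i Σⱼ σⱼ (x × ∇φ(x))ⱼ, where L = −i x × ∇. -/
def sigmaL (φ : R3 → C2) (x : R3) : C2 :=
  (-Complex.I) • ∑ j : Fin 3, matVec (pauli j) (crossGrad φ x j)

/-- A₊[V₁,V₂] := sup_{r>0} (1/r²) ∫₀^r (V₁(t)+V₂(t)) t² dt, in [0,∞]. -/
def Aplus (V₁ V₂ : ℝ → ℝ) : ℝ≥0∞ :=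
  ⨆ r ∈ Set.Ioi (0 : ℝ), ENNReal.ofReal (1 / r ^ 2) *
    ∫⁻ t in Set.Ioo 0 r, ENNReal.ofReal ((V₁ t + V₂ t) * t ^ 2)

/-- A₋[V₁,V₂] := sup_{r>0} r² ∫_r^∞ (V₁(t)+V₂(t)) t⁻² dt, in [0,∞]. -/
def Aminus (V₁ V₂ : ℝ → ℝ) : ℝ≥0∞ :=
  ⨆ r ∈ Set.Ioi (0 : ℝ), ENNReal.ofReal (r ^ 2) *
    ∫⁻ t in Set.Ioi r, ENNReal.ofReal ((V₁ t + V₂ t) / t ^ 2)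

/-- The directional derivative a·∇φ := Σⱼ aⱼ ∂φ/∂xⱼ. -/
def dirDeriv (a : R3) (φ : R3 → C2) (x : R3) : C2 :=
  ∑ j : Fin 3, (a j : ℂ) • pderiv φ j x


section Helpers

open Metric

variable {E' : Type*} [NormedAddCommGroup E'] [NormedSpace ℝ E']

lemma integrable_subtype_comap_iff {s : Set ℝ} (hs : MeasurableSet s) (f : ℝ → E') :
    Integrable (fun x : s => f x) (Measure.comap Subtype.val volume) ↔ IntegrableOn f s volume := by
  rw [IntegrableOn, ← map_comap_subtype_coe hs,
    (MeasurableEmbedding.subtype_coe hs).integrable_map_iff]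
  exact Iff.rfl

lemma integral_volumeIoiPow2 [CompleteSpace E'] (h : ℝ → E') :
    ∫ x : Set.Ioi (0:ℝ), h x ∂(Measure.volumeIoiPow 2) = ∫ r in Set.Ioi (0:ℝ), r ^ 2 • h r := by
  rw [Measure.volumeIoiPow]
  simp only [ENNReal.ofReal]
  rw [integral_withDensity_eq_integral_smul ((measurable_subtype_coe.pow_const _).real_toNNReal),
    integral_subtype_comap measurableSet_Ioi fun a => Real.toNNReal (a ^ 2) • h a,
    setIntegral_congr_fun measurableSet_Ioi fun x hx => ?_]
  rw [NNReal.smul_def, Real.coe_toNNReal _ (pow_nonneg hx.out.le _)]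

lemma integrable_volumeIoiPow2_iff (h : ℝ → E') :
    Integrable (fun x : Set.Ioi (0:ℝ) => h x) (Measure.volumeIoiPow 2) ↔
      IntegrableOn (fun r => r ^ 2 • h r) (Set.Ioi 0) volume := by
  rw [Measure.volumeIoiPow]
  simp only [ENNReal.ofReal]
  rw [integrable_withDensity_iff_integrable_smul ((measurable_subtype_coe.pow_const _).real_toNNReal)]
  have h2 : (fun x : Set.Ioi (0:ℝ) => Real.toNNReal ((x:ℝ) ^ 2) • h x)
      = fun x : Set.Ioi (0:ℝ) => ((x:ℝ) ^ 2) • h (x:ℝ) := by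
    funext x
    rw [NNReal.smul_def, Real.coe_toNNReal _ (pow_nonneg x.2.out.le _)]
  rw [h2]
  exact integrable_subtype_comap_iff measurableSet_Ioi (fun r => r ^ 2 • h r)

lemma measurePreserving_R3 : MeasurePreserving (homeomorphUnitSphereProd R3)
    ((volume : Measure R3).comap (↑))
    (((volume : Measure R3).toSphere).prod (Measure.volumeIoiPow 2)) := by
  have := Measure.measurePreserving_homeomorphUnitSphereProd (volume : Measure R3)
  simpa [finrank_euclideanSpace] using this

lemma polar_integral [CompleteSpace E'] (f : R3 → E') :
    ∫ x, f x = ∫ p : sphere (0:R3) 1 × Set.Ioi (0:ℝ), f ((p.2 : ℝ) • (p.1 : R3))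
      ∂(((volume : Measure R3).toSphere).prod (Measure.volumeIoiPow 2)) := by
  have h0 : ∫ x, f x ∂(volume : Measure R3)
      = ∫ x : ({0}ᶜ : Set R3), f x ∂((volume : Measure R3).comap (↑)) := by
    rw [integral_subtype_comap (measurableSet_singleton _).compl f,
      restrict_compl_singleton]
  rw [h0, ← measurePreserving_R3.integral_comp (Homeomorph.measurableEmbedding _)
    (fun p : sphere (0:R3) 1 × Set.Ioi (0:ℝ) => f ((p.2 : ℝ) • (p.1 : R3)))]
  refine integral_congr_ae (Filter.Eventually.of_forall fun x => ?_)
  show f x.1 = f ((‖x.1‖ / 1) • ((1:ℝ) • ‖x.1‖⁻¹ • x.1))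
  rw [div_one, one_smul, smul_inv_smul₀ (norm_ne_zero_iff.2 x.2)]

lemma polar_integrable_iff (f : R3 → E') :
    Integrable (fun p : sphere (0:R3) 1 × Set.Ioi (0:ℝ) => f ((p.2 : ℝ) • (p.1 : R3)))
      (((volume : Measure R3).toSphere).prod (Measure.volumeIoiPow 2)) ↔
    Integrable f (volume : Measure R3) := by
  rw [← measurePreserving_R3.integrable_comp_emb (Homeomorph.measurableEmbedding _)]
  have h1 : ((fun p : sphere (0:R3) 1 × Set.Ioi (0:ℝ) => f ((p.2 : ℝ) • (p.1 : R3)))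
      ∘ (homeomorphUnitSphereProd R3)) = fun x : ({0}ᶜ : Set R3) => f x := by
    funext x
    show f ((‖x.1‖ / 1) • ((1:ℝ) • ‖x.1‖⁻¹ • x.1)) = f x.1
    rw [div_one, one_smul, smul_inv_smul₀ (norm_ne_zero_iff.2 x.2)]
  rw [h1, show (fun x : ({0}ᶜ : Set R3) => f x) = f ∘ Subtype.val from rfl,
    ← (MeasurableEmbedding.subtype_coe (measurableSet_singleton (0:R3)).compl).integrable_map_iff,
    map_comap_subtype_coe (measurableSet_singleton (0:R3)).compl,
    restrict_compl_singleton]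


lemma exists_bound_of_hcs {X E : Type*} [TopologicalSpace X] [NormedAddCommGroup E]
    {f : X → E} (hf : Continuous f) (h : HasCompactSupport f) :
    ∃ C : ℝ, 0 ≤ C ∧ ∀ x, ‖f x‖ ≤ C := by
  obtain ⟨C, hC⟩ := h.isCompact.exists_bound_of_continuousOn hf.continuousOn
  refine ⟨max C 0, le_max_right _ _, fun x => ?_⟩
  by_cases hx : x ∈ tsupport f
  · exact (hC x hx).trans (le_max_left _ _)
  · rw [image_eq_zero_of_notMem_tsupport hx]; simp

lemma key1D (W : ℝ → ℝ) (hWm : Measurable W)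
    (hloc : LocallyIntegrableOn (fun s : ℝ => |W s| * s ^ 2) (Set.Ici (0:ℝ)))
    (u u' : ℝ → ℝ) (hu'c : Continuous u')
    (hderiv : ∀ t, HasDerivAt u (u' t) t)
    (husupp : HasCompactSupport u) :
    ∫ r in Set.Ioi (0:ℝ), W r * r ^ 2 * u r
      = - ∫ t in Set.Ioi (0:ℝ), (∫ s in Set.Ioo (0:ℝ) t, W s * s ^ 2) * u' t := by
  have hu'supp : HasCompactSupport u' := by
    have : u' = deriv u := funext fun t => ((hderiv t).deriv).symm
    rw [this]; exact husupp.deriv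
  have hu'int : Integrable u' := hu'c.integrable_of_hasCompactSupport hu'supp
  obtain ⟨M, hM⟩ := hu'supp.isCompact.isBounded.subset_closedBall 0
  obtain ⟨M₂, hM₂⟩ := husupp.isCompact.isBounded.subset_closedBall 0
  obtain ⟨C, hC0, hC⟩ := exists_bound_of_hcs hu'c hu'supp
  set M' : ℝ := max M 1 with hM'def
  have hM'pos : (0:ℝ) < M' := lt_of_lt_of_le one_pos (le_max_right _ _)
  have hu'zero : ∀ t, M' < |t| → u' t = 0 := by
    intro t ht
    by_contra h
    have := hM (subset_tsupport u' (Function.mem_support.2 h))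
    rw [Metric.mem_closedBall, Real.dist_eq, sub_zero] at this
    have : M ≤ M' := le_max_left _ _
    linarith [hM (subset_tsupport u' (Function.mem_support.2 h)), this]
  have huzero : ∀ t, M₂ < |t| → u t = 0 := by
    intro t ht
    by_contra h
    have h2 := hM₂ (subset_tsupport u (Function.mem_support.2 h))
    rw [Metric.mem_closedBall, Real.dist_eq, sub_zero] at h2
    linarith
  have hurep : ∀ r : ℝ, u r = - ∫ t in Set.Ioi r, u' t := by
    intro r
    have h1 : ∫ t in Set.Ioi r, u' t = 0 - u r := by
      refine integral_Ioi_of_hasDerivAt_of_tendsto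
        (hderiv r).continuousAt.continuousWithinAt
        (fun x _ => hderiv x) hu'int.integrableOn ?_
      have hev : ∀ᶠ t in Filter.atTop, u t = 0 := by
        filter_upwards [Filter.eventually_gt_atTop (max M₂ 0)] with t ht
        refine huzero t ?_
        rw [abs_of_pos (lt_of_le_of_lt (le_max_right _ _) ht)]
        exact lt_of_le_of_lt (le_max_left _ _) ht
      exact Filter.Tendsto.congr' (hev.mono fun t h => h.symm) tendsto_const_nhds
    rw [h1]; ring
  -- set up the 2D function
  set S : Set (ℝ × ℝ) := {q : ℝ × ℝ | 0 < q.1 ∧ q.1 < q.2} with hSdef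
  have hSopen : IsOpen S :=
    (isOpen_lt continuous_const continuous_fst).inter (isOpen_lt continuous_fst continuous_snd)
  set f2 : ℝ × ℝ → ℝ := S.indicator (fun q => W q.1 * q.1 ^ 2 * u' q.2) with hf2def
  have hf2m : Measurable f2 :=
    (((hWm.comp measurable_fst).mul (measurable_fst.pow_const 2)).mul
      (hu'c.measurable.comp measurable_snd)).indicator hSopen.measurableSet
  have hWabs : IntegrableOn (fun s => |W s| * s ^ 2) (Set.Ioc 0 M') := by
    refine (hloc.integrableOn_compact_subset ?_ isCompact_Icc).mono_set Set.Ioc_subset_Icc_self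
    exact fun x hx => hx.1
  have hb1 : Integrable ((Set.Ioc (0:ℝ) M').indicator (fun s => |W s| * s ^ 2)) :=
    hWabs.integrable_indicator measurableSet_Ioc
  have hb2 : Integrable ((Set.Icc (-M') M').indicator (fun _ : ℝ => C)) :=
    (integrableOn_const (by rw [Real.volume_Icc]; exact ENNReal.ofReal_ne_top)).integrable_indicator
      measurableSet_Icc
  have hbound : ∀ p : ℝ × ℝ, ‖f2 p‖ ≤
      ((Set.Ioc (0:ℝ) M').indicator (fun s => |W s| * s ^ 2)) p.1 *
      ((Set.Icc (-M') M').indicator (fun _ : ℝ => C)) p.2 := by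
    intro p
    by_cases hp : p ∈ S
    · by_cases hz : u' p.2 = 0
      · rw [hf2def]
        simp only [Set.indicator_of_mem hp, hz, mul_zero, norm_zero]
        apply mul_nonneg <;> apply Set.indicator_nonneg <;> intro s _
        · positivity
        · exact hC0
      · have h2 : |p.2| ≤ M' := by
          by_contra hcon
          exact hz (hu'zero p.2 (not_le.1 hcon))
      
        have hp1 : p.1 ∈ Set.Ioc 0 M' :=
          ⟨hp.1, le_trans hp.2.le (le_trans (le_abs_self _) h2)⟩
        have hp2 : p.2 ∈ Set.Icc (-M') M' := abs_le.1 h2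
        rw [hf2def]
        simp only [Set.indicator_of_mem hp, Set.indicator_of_mem hp1, Set.indicator_of_mem hp2]
        rw [Real.norm_eq_abs, abs_mul, abs_mul, abs_pow, sq_abs]
        exact mul_le_mul_of_nonneg_left (hC p.2) (by positivity)
    · rw [hf2def]
      simp only [Set.indicator_of_notMem hp, norm_zero]
      apply mul_nonneg <;> apply Set.indicator_nonneg <;> intro s _
      · positivity
      · exact hC0
  have hf2int : Integrable f2 (volume.prod volume) :=
    Integrable.mono' (hb1.mul_prod hb2) hf2m.aestronglyMeasurable (ae_of_all _ hbound)
  -- inner integral identifications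
  have hinner1 : ∀ r : ℝ, r ∈ Set.Ioi (0:ℝ) →
      ∫ t, f2 (r, t) = ∫ t in Set.Ioi r, (W r * r ^ 2) * u' t := by
    intro r hr
    rw [← integral_indicator measurableSet_Ioi]
    congr 1
    funext t
    by_cases ht : r < t
    · have hmem : (r, t) ∈ S := ⟨hr, ht⟩
      simp only [hf2def, Set.indicator_of_mem hmem, Set.indicator_of_mem (Set.mem_Ioi.2 ht)]
    · have hnm : (r, t) ∉ S := fun hc => ht hc.2
      simp only [hf2def, Set.indicator_of_notMem hnm,
        Set.indicator_of_notMem (fun h => ht (Set.mem_Ioi.1 h))]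
  have hinner0 : ∀ r : ℝ, r ∉ Set.Ioi (0:ℝ) → (∫ t, f2 (r, t)) = 0 := by
    intro r hr
    have : ∀ t, f2 (r, t) = 0 := fun t =>
      Set.indicator_of_notMem (fun hc => hr hc.1) _
    simp [this]
  have hinner2 : ∀ t : ℝ, ∫ r, f2 (r, t)
      = (∫ s in Set.Ioo (0:ℝ) t, W s * s ^ 2) * u' t := by
    intro t
    have : ∀ r, f2 (r, t) = (Set.Ioo (0:ℝ) t).indicator (fun r => (W r * r ^ 2) * u' t) r := by
      intro r
      by_cases hr : r ∈ Set.Ioo 0 t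
      · have hmem : (r, t) ∈ S := ⟨hr.1, hr.2⟩
        simp only [hf2def, Set.indicator_of_mem hmem, Set.indicator_of_mem hr]
      · have hnm : (r, t) ∉ S := fun hc => hr ⟨hc.1, hc.2⟩
        simp only [hf2def, Set.indicator_of_notMem hnm, Set.indicator_of_notMem hr]
    rw [funext this, integral_indicator measurableSet_Ioo, integral_mul_const]
  -- chain
  calc ∫ r in Set.Ioi (0:ℝ), W r * r ^ 2 * u r
      = ∫ r in Set.Ioi (0:ℝ), -((W r * r ^ 2) * ∫ t in Set.Ioi r, u' t) := by
        refine setIntegral_congr_fun measurableSet_Ioi fun r _ => ?_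
        rw [hurep r]; ring
    _ = - ∫ r in Set.Ioi (0:ℝ), ∫ t, f2 (r, t) := by
        rw [integral_neg]
        congr 1
        refine setIntegral_congr_fun measurableSet_Ioi fun r hr => ?_
        rw [hinner1 r hr]
        exact (integral_const_mul _ _).symm
    _ = - ∫ r, ∫ t, f2 (r, t) := by
        rw [setIntegral_eq_integral_of_forall_compl_eq_zero fun r hr => hinner0 r hr]
    _ = - ∫ t, ∫ r, f2 (r, t) := by
        congr 1
        exact integral_integral_swap (f := fun r t => f2 (r, t)) hf2int
    _ = - ∫ t, (∫ s in Set.Ioo (0:ℝ) t, W s * s ^ 2) * u' t := by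
        congr 1
        exact integral_congr_ae (ae_of_all _ hinner2)
    _ = - ∫ t in Set.Ioi (0:ℝ), (∫ s in Set.Ioo (0:ℝ) t, W s * s ^ 2) * u' t := by
        congr 1
        refine (setIntegral_eq_integral_of_forall_compl_eq_zero fun t ht => ?_).symm
        rw [Set.Ioo_eq_empty (fun h0t => ht h0t)]
        simp


end Helpers

set_option maxHeartbeats 2000000 in
/-- ∫ W(|x|)|φ|² = −2 Re ∫ g_W(|x|) ⟨(x/|x|)·∇φ, φ⟩, where
⟨u,v⟩ = Σᵢ uᵢ conj(vᵢ) (so ⟨u,v⟩ is `inner v u` in Mathlib's convention). -/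
theorem integral_weight_eq_re_integral
    (W : ℝ → ℝ) (hWm : Measurable W)
    (hloc : LocallyIntegrableOn (fun s : ℝ => |W s| * s ^ 2) (Set.Ici (0 : ℝ)))
    (g : ℝ → ℝ)
    (hg : ∀ t : ℝ, 0 < t → g t = (1 / t ^ 2) * ∫ s in Set.Ioo (0 : ℝ) t, W s * s ^ 2)
    (φ : R3 → C2) (hφ : ContDiff ℝ (⊤ : ℕ∞) φ) (hsupp : HasCompactSupport φ)
    (hint : Integrable fun x : R3 => W ‖x‖ * ‖φ x‖ ^ 2) :
    ∫ x : R3, W ‖x‖ * ‖φ x‖ ^ 2 =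
      -2 * (∫ x : R3, ((g ‖x‖ : ℝ) : ℂ) *
        (inner ℂ (φ x) (dirDeriv (‖x‖⁻¹ • x) φ x) : ℂ)).re := by
  classical
  have hφdiff : Differentiable ℝ φ := hφ.differentiable (by simp)
  have hφc : Continuous φ := hφ.continuous
  have hfd : Continuous (fderiv ℝ φ) := hφ.continuous_fderiv (by simp)
  -- dirDeriv is application of the Fréchet derivative
  have hdir : ∀ (a x : R3), dirDeriv a φ x = fderiv ℝ φ x a := by
    intro a x
    have ha : a = ∑ j : Fin 3, a j • EuclideanSpace.single j (1:ℝ) := by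
      ext i
      rw [show ((∑ j : Fin 3, a j • EuclideanSpace.single j (1:ℝ)) i)
          = ∑ j : Fin 3, (a j • EuclideanSpace.single j (1:ℝ)) i from
        by rw [WithLp.ofLp_sum, Finset.sum_apply]]
      simp [EuclideanSpace.single_apply]
    calc dirDeriv a φ x = ∑ j : Fin 3, a j • pderiv φ j x := by
          unfold dirDeriv
          exact Finset.sum_congr rfl fun j _ => Complex.coe_smul _ _
      _ = fderiv ℝ φ x a := by
          conv_rhs => rw [ha]
          rw [map_sum]
          exact Finset.sum_congr rfl fun j _ => by rw [ContinuousLinearMap.map_smul]; rfl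
  -- the primitive P
  set P : ℝ → ℝ := fun t => ∫ s in Set.Ioo (0:ℝ) t, W s * s ^ 2 with hPdef
  have hWcpt : ∀ K : Set ℝ, IsCompact K → IntegrableOn (fun s => W s * s ^ 2) (K ∩ Set.Ici 0) := by
    intro K hK
    have habs : IntegrableOn (fun s => |W s| * s ^ 2) (K ∩ Set.Ici 0) :=
      hloc.integrableOn_compact_subset Set.inter_subset_right (hK.inter_right isClosed_Ici)
    refine Integrable.mono' habs ((hWm.mul (measurable_id.pow_const 2)).aestronglyMeasurable) ?_
    refine Filter.Eventually.of_forall fun s => ?_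
    rw [Real.norm_eq_abs, abs_mul, abs_pow, sq_abs]
  set k : ℝ → ℝ := (Set.Ioi (0:ℝ)).indicator (fun s => W s * s ^ 2) with hkdef
  have hkint : ∀ a b : ℝ, IntervalIntegrable k volume a b := by
    intro a b
    rw [intervalIntegrable_iff, IntegrableOn, integrable_indicator_iff measurableSet_Ioi,
      IntegrableOn, Measure.restrict_restrict measurableSet_Ioi]
    refine (hWcpt (Set.uIcc a b) isCompact_uIcc).mono_set ?_
    intro x hx
    exact ⟨Set.uIoc_subset_uIcc hx.2, Set.mem_Ici.2 (le_of_lt hx.1)⟩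
  have hPk : ∀ t, P t = ∫ x in (0:ℝ)..t, k x := by
    intro t
    show (∫ s in Set.Ioo (0:ℝ) t, W s * s ^ 2) = ∫ x in (0:ℝ)..t, k x
    by_cases ht : 0 ≤ t
    · rw [intervalIntegral.integral_of_le ht,
        ← MeasureTheory.integral_Ioc_eq_integral_Ioo]
      refine (setIntegral_congr_fun measurableSet_Ioc fun s hs => ?_).symm
      exact Set.indicator_of_mem hs.1 _
    · push_neg at ht
      rw [Set.Ioo_eq_empty (by intro h; linarith), intervalIntegral.integral_of_ge ht.le]
      have hz : ∀ s ∈ Set.Ioc t 0, k s = 0 := fun s hs =>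
        Set.indicator_of_notMem (by intro h; exact absurd hs.2 (not_le.2 h)) _
      rw [setIntegral_congr_fun measurableSet_Ioc hz]
      simp
  have hPcont : Continuous P := by
    refine (intervalIntegral.continuous_primitive hkint 0).congr fun t => (hPk t).symm
  -- support radius
  obtain ⟨R₀, hR₀⟩ := hsupp.isCompact.isBounded.subset_closedBall 0
  set R : ℝ := max R₀ 1 with hRdef
  have hR1 : (1:ℝ) ≤ R := le_max_right _ _
  have hRpos : (0:ℝ) < R := lt_of_lt_of_le one_pos hR1
  have hφ0 : ∀ x : R3, R < ‖x‖ → φ x = 0 := by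
    intro x hx
    refine image_eq_zero_of_notMem_tsupport fun hmem => ?_
    have h1 := hR₀ hmem
    rw [Metric.mem_closedBall, dist_zero_right] at h1
    have h2 : R₀ ≤ R := le_max_left _ _
    linarith
  -- bounds
  obtain ⟨c1, hc10, hc1⟩ := exists_bound_of_hcs hφc hsupp
  obtain ⟨c2, hc20, hc2⟩ := exists_bound_of_hcs hfd (hsupp.fderiv (𝕜 := ℝ))
  obtain ⟨cP, hcP⟩ := (isCompact_Icc (a := (0:ℝ)) (b := R)).exists_bound_of_continuousOn
    hPcont.continuousOn
  have hcP0 : 0 ≤ cP := le_trans (norm_nonneg _) (hcP 0 ⟨le_refl _, hRpos.le⟩)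
  -- the measurable versions of g and the integrand
  set g2 : ℝ → ℝ := fun t => (t ^ 2)⁻¹ * P t with hg2def
  have hgg2 : ∀ t : ℝ, 0 < t → g t = g2 t := by
    intro t ht
    rw [hg t ht, one_div, hg2def]
  set IP : R3 → ℂ := fun x => (inner ℂ (φ x) (dirDeriv (‖x‖⁻¹ • x) φ x) : ℂ) with hIPdef
  set G2 : R3 → ℂ := fun x => ((g2 ‖x‖ : ℝ) : ℂ) * IP x with hG2def
  have hxj : ∀ j : Fin 3, Continuous fun x : R3 => x j := by
    intro j
    exact (EuclideanSpace.proj j : R3 →L[ℝ] ℝ).continuous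
  have hpderivc : ∀ j : Fin 3, Continuous fun x => pderiv φ j x :=
    fun j => hfd.clm_apply continuous_const
  have hdirsm : StronglyMeasurable fun x : R3 => dirDeriv (‖x‖⁻¹ • x) φ x := by
    unfold dirDeriv
    refine Finset.stronglyMeasurable_fun_sum _ fun j _ => ?_
    refine StronglyMeasurable.fun_smul ?_ (hpderivc j).stronglyMeasurable
    have hm : Measurable fun x : R3 => ((‖x‖⁻¹ • x) j : ℝ) := by
      have he : (fun x : R3 => ((‖x‖⁻¹ • x) j : ℝ)) = fun x : R3 => ‖x‖⁻¹ * x j := by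
        funext x; simp [PiLp.smul_apply, smul_eq_mul]
      rw [he]
      exact (measurable_norm.inv).mul (hxj j).measurable
    exact (Complex.measurable_ofReal.comp hm).stronglyMeasurable
  have hIPm : StronglyMeasurable IP := by
    have : IP = fun x => (inner ℂ : C2 → C2 → ℂ)
        (φ x) (dirDeriv (‖x‖⁻¹ • x) φ x) := rfl
    rw [this]
    exact continuous_inner.comp_stronglyMeasurable
      (hφc.stronglyMeasurable.prodMk hdirsm)
  have hG2m : StronglyMeasurable G2 := by
    refine StronglyMeasurable.mul ?_ hIPm
    have hm : Measurable g2 := ((measurable_id.pow_const 2).inv).mul hPcont.measurable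
    exact (Complex.measurable_ofReal.comp (hm.comp measurable_norm)).stronglyMeasurable
  -- polar setup
  set μS := (volume : Measure R3).toSphere with hμSdef
  set ν := MeasureTheory.Measure.volumeIoiPow 2 with hνdef
  have hTrc : Continuous fun p : Metric.sphere (0:R3) 1 × Set.Ioi (0:ℝ) =>
      ((p.2 : ℝ) • (p.1 : R3)) :=
    (continuous_subtype_val.comp continuous_snd).smul
      (continuous_subtype_val.comp continuous_fst)
  -- transported integrand bounds for G2
  have hG2bound : ∀ p : Metric.sphere (0:R3) 1 × Set.Ioi (0:ℝ),
      ‖G2 ((p.2 : ℝ) • (p.1 : R3))‖ ≤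
        (c1 * c2 * cP) * (Set.Ioc (0:ℝ) R).indicator (fun t => (t ^ 2)⁻¹) (p.2 : ℝ) := by
    rintro ⟨ω, r⟩
    have hr : (0:ℝ) < r := r.2
    have hω : ‖(ω : R3)‖ = 1 := mem_sphere_zero_iff_norm.1 ω.2
    set x : R3 := (r : ℝ) • (ω : R3) with hxdef
    have hnx : ‖x‖ = (r : ℝ) := by
      rw [hxdef, norm_smul, Real.norm_eq_abs, abs_of_pos hr, hω, mul_one]
    by_cases hrR : (r : ℝ) ≤ R
    · have hmem : (r : ℝ) ∈ Set.Ioc (0:ℝ) R := ⟨hr, hrR⟩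
      rw [Set.indicator_of_mem hmem]
      have hIPle : ‖IP x‖ ≤ c1 * c2 := by
        have h1 : ‖IP x‖ ≤ ‖φ x‖ * ‖dirDeriv (‖x‖⁻¹ • x) φ x‖ := norm_inner_le_norm _ _
        have h2 : ‖dirDeriv (‖x‖⁻¹ • x) φ x‖ ≤ c2 := by
          rw [hdir]
          refine le_trans (ContinuousLinearMap.le_opNorm _ _) ?_
          have hnxpos : (0:ℝ) < ‖x‖ := by rw [hnx]; exact hr
          have hna : ‖(‖x‖⁻¹ • x)‖ = 1 := by
            rw [norm_smul, Real.norm_eq_abs, abs_of_pos (inv_pos.2 hnxpos),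
              inv_mul_cancel₀ hnxpos.ne']
          rw [hna, mul_one]
          exact hc2 x
        exact le_trans h1 (mul_le_mul (hc1 x) h2 (norm_nonneg _) hc10)
      have hg2le : ‖(((g2 ‖x‖ : ℝ)) : ℂ)‖ ≤ ((r:ℝ) ^ 2)⁻¹ * cP := by
        rw [Complex.norm_real, Real.norm_eq_abs, hnx, hg2def]
        show |((r:ℝ) ^ 2)⁻¹ * P (r:ℝ)| ≤ ((r:ℝ) ^ 2)⁻¹ * cP
        rw [abs_mul, abs_inv, abs_pow, sq_abs]
        refine mul_le_mul_of_nonneg_left ?_ (by positivity)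
        have := hcP (r:ℝ) ⟨hr.le, hrR⟩
        rwa [Real.norm_eq_abs] at this
      calc ‖G2 x‖ = ‖(((g2 ‖x‖ : ℝ)) : ℂ)‖ * ‖IP x‖ := norm_mul _ _
        _ ≤ (((r:ℝ) ^ 2)⁻¹ * cP) * (c1 * c2) :=
            mul_le_mul hg2le hIPle (norm_nonneg _) (by positivity)
        _ = (c1 * c2 * cP) * ((r:ℝ) ^ 2)⁻¹ := by ring
    · have hz : φ x = 0 := hφ0 x (by rw [hnx]; exact not_le.1 hrR)
      have : G2 x = 0 := by
        rw [hG2def]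
        simp [hIPdef, hz]
      rw [this, Set.indicator_of_notMem (fun hc => hrR hc.2)]
      simp
  -- integrability of the transported G2
  have hbndInt : Integrable (fun r : Set.Ioi (0:ℝ) =>
      (Set.Ioc (0:ℝ) R).indicator (fun t => (t ^ 2)⁻¹) (r : ℝ)) ν := by
    rw [hνdef, integrable_volumeIoiPow2_iff]
    have he : (fun r : ℝ => r ^ 2 • (Set.Ioc (0:ℝ) R).indicator (fun t => (t ^ 2)⁻¹) r)
        = (Set.Ioc (0:ℝ) R).indicator (fun _ => (1:ℝ)) := by
      funext r
      by_cases hr : r ∈ Set.Ioc (0:ℝ) R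
      · rw [Set.indicator_of_mem hr, Set.indicator_of_mem hr, smul_eq_mul,
          mul_inv_cancel₀ (pow_ne_zero 2 hr.1.ne')]
      · rw [Set.indicator_of_notMem hr, Set.indicator_of_notMem hr, smul_zero]
    rw [he]
    exact ((integrableOn_const (by rw [Real.volume_Ioc]; exact ENNReal.ofReal_ne_top)).integrable_indicator
      measurableSet_Ioc).integrableOn
  have hG2transSM : AEStronglyMeasurable
      (fun p : Metric.sphere (0:R3) 1 × Set.Ioi (0:ℝ) => G2 ((p.2 : ℝ) • (p.1 : R3)))
      (μS.prod ν) :=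
    (hG2m.comp_measurable hTrc.measurable).aestronglyMeasurable
  have hG2transInt : Integrable
      (fun p : Metric.sphere (0:R3) 1 × Set.Ioi (0:ℝ) => G2 ((p.2 : ℝ) • (p.1 : R3)))
      (μS.prod ν) := by
    refine Integrable.mono' ?_ hG2transSM (Filter.Eventually.of_forall hG2bound)
    have hconst : Integrable (fun _ : Metric.sphere (0:R3) 1 => (c1 * c2 * cP)) μS :=
      integrable_const _
    exact hconst.mul_prod hbndInt
  -- transported integrability of the left-hand side
  have hFtransInt : Integrable
      (fun p : Metric.sphere (0:R3) 1 × Set.Ioi (0:ℝ) =>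
        W ‖((p.2 : ℝ) • (p.1 : R3))‖ * ‖φ ((p.2 : ℝ) • (p.1 : R3))‖ ^ 2) (μS.prod ν) :=
    (polar_integrable_iff _).2 hint
  -- the pointwise (in ω) identity
  have hkey : ∀ᵐ (ω : Metric.sphere (0:R3) 1) ∂μS, (∫ r : Set.Ioi (0:ℝ),
        W ‖((r : ℝ) • (ω : R3))‖ * ‖φ ((r : ℝ) • (ω : R3))‖ ^ 2 ∂ν)
      = -2 * (∫ r : Set.Ioi (0:ℝ), G2 ((r : ℝ) • (ω : R3)) ∂ν).re := by
    filter_upwards [hG2transInt.prod_right_ae] with ω hsl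
    have hω : ‖(ω : R3)‖ = 1 := mem_sphere_zero_iff_norm.1 ω.2
    set u : ℝ → ℝ := fun r => ‖φ (r • (ω : R3))‖ ^ 2 with hudef
    set u' : ℝ → ℝ := fun t =>
      2 * (inner ℂ (φ (t • (ω : R3))) (fderiv ℝ φ (t • (ω : R3)) (ω : R3)) : ℂ).re with hu'def
    have hsm : Continuous fun t : ℝ => t • (ω : R3) := continuous_id.smul continuous_const
    have hnrm : ∀ r : ℝ, ‖r • (ω : R3)‖ = |r| := by
      intro r
      rw [norm_smul, Real.norm_eq_abs, hω, mul_one]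
    have hc : ∀ r : ℝ, HasDerivAt (fun s : ℝ => φ (s • (ω : R3)))
        (fderiv ℝ φ (r • (ω : R3)) (ω : R3)) r := by
      intro r
      have h1 : HasDerivAt (fun s : ℝ => s • (ω : R3)) (ω : R3) r := by
        simpa using (hasDerivAt_id r).smul_const (ω : R3)
      exact ((hφdiff _).hasFDerivAt).comp_hasDerivAt r h1
    have hu'c : Continuous u' := by
      refine continuous_const.mul (Complex.continuous_re.comp ?_)
      exact continuous_inner.comp ((hφc.comp hsm).prodMk ((hfd.comp hsm).clm_apply continuous_const))
    have hderivu : ∀ t, HasDerivAt u (u' t) t := by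
      intro t
      have h1 := (hc t).inner ℂ (hc t)
      have h2 : HasDerivAt (fun s : ℝ =>
            ((inner ℂ (φ (s • (ω : R3))) (φ (s • (ω : R3))) : ℂ)).re)
          (((inner ℂ (φ (t • (ω : R3))) (fderiv ℝ φ (t • (ω : R3)) (ω : R3)) : ℂ)
            + (inner ℂ (fderiv ℝ φ (t • (ω : R3)) (ω : R3)) (φ (t • (ω : R3))) : ℂ)).re) t :=
        Complex.reCLM.hasFDerivAt.comp_hasDerivAt t h1
      have h3 : (fun s : ℝ =>
          ((inner ℂ (φ (s • (ω : R3))) (φ (s • (ω : R3))) : ℂ)).re) = u := by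
        funext s
        have := inner_self_eq_norm_sq (𝕜 := ℂ) (φ (s • (ω : R3)))
        simpa [RCLike.re_to_complex] using this
      rw [h3] at h2
      convert h2 using 1
      have h4 : (inner ℂ (fderiv ℝ φ (t • (ω : R3)) (ω : R3)) (φ (t • (ω : R3))) : ℂ)
          = (starRingEnd ℂ) (inner ℂ (φ (t • (ω : R3))) (fderiv ℝ φ (t • (ω : R3)) (ω : R3)) : ℂ) :=
        (inner_conj_symm _ _).symm
      rw [hu'def]
      show (2:ℝ) * _ = _
      rw [Complex.add_re, h4, Complex.conj_re]
      ring
    have husupp : HasCompactSupport u := by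
      refine HasCompactSupport.intro (isCompact_Icc (a := -R) (b := R)) fun r hr => ?_
      have habs : R < |r| := by
        rcases not_and_or.1 (fun hc => hr ⟨hc.1, hc.2⟩) with h | h
        · rw [abs_of_neg (by linarith [not_le.1 h] : r < 0)]
          linarith [not_le.1 h]
        · rw [abs_of_pos (by linarith [not_le.1 h] : 0 < r)]
          exact not_le.1 h
      have : φ (r • (ω : R3)) = 0 := hφ0 _ (by rw [hnrm]; exact habs)
      rw [hudef]
      simp [this]
    -- left side
    have hL : (∫ r : Set.Ioi (0:ℝ),
        W ‖((r : ℝ) • (ω : R3))‖ * ‖φ ((r : ℝ) • (ω : R3))‖ ^ 2 ∂ν)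
        = - ∫ t in Set.Ioi (0:ℝ), P t * u' t := by
      have h6 : (∫ r : Set.Ioi (0:ℝ),
            W ‖((r : ℝ) • (ω : R3))‖ * ‖φ ((r : ℝ) • (ω : R3))‖ ^ 2 ∂ν)
          = ∫ r in Set.Ioi (0:ℝ), r ^ 2 • (W ‖r • (ω : R3)‖ * ‖φ (r • (ω : R3))‖ ^ 2) :=
        integral_volumeIoiPow2 (fun t : ℝ => W ‖t • (ω : R3)‖ * ‖φ (t • (ω : R3))‖ ^ 2)
      rw [h6]
      have h5 : ∫ r in Set.Ioi (0:ℝ), r ^ 2 • (W ‖r • (ω : R3)‖ * ‖φ (r • (ω : R3))‖ ^ 2)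
          = ∫ r in Set.Ioi (0:ℝ), W r * r ^ 2 * u r := by
        refine setIntegral_congr_fun measurableSet_Ioi fun r hr => ?_
        rw [hnrm r, abs_of_pos hr, smul_eq_mul, hudef]
        ring
      rw [h5, key1D W hWm hloc u u' hu'c hderivu husupp]
    -- right side
    have hslint : IntegrableOn (fun t : ℝ => t ^ 2 • G2 (t • (ω : R3))) (Set.Ioi 0) := by
      rw [← integrable_volumeIoiPow2_iff]
      exact hsl
    have hR' : (∫ r : Set.Ioi (0:ℝ), G2 ((r : ℝ) • (ω : R3)) ∂ν).re
        = ∫ t in Set.Ioi (0:ℝ), (t ^ 2 • G2 (t • (ω : R3))).re := by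
      have h7 : (∫ r : Set.Ioi (0:ℝ), G2 ((r : ℝ) • (ω : R3)) ∂ν)
          = ∫ t in Set.Ioi (0:ℝ), t ^ 2 • G2 (t • (ω : R3)) :=
        integral_volumeIoiPow2 (fun t : ℝ => G2 (t • (ω : R3)))
      rw [h7]
      exact (integral_re hslint).symm
    rw [hL, hR']
    rw [show (-2 : ℝ) * ∫ t in Set.Ioi (0:ℝ), (t ^ 2 • G2 (t • (ω : R3))).re
        = - ∫ t in Set.Ioi (0:ℝ), 2 * (t ^ 2 • G2 (t • (ω : R3))).re from by
      rw [integral_const_mul]; ring]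
    congr 1
    refine setIntegral_congr_fun measurableSet_Ioi fun t ht => ?_
    have htpos : (0:ℝ) < t := ht
    have hnt : ‖t • (ω : R3)‖ = t := by rw [hnrm, abs_of_pos htpos]
    have hdir2 : dirDeriv (‖t • (ω : R3)‖⁻¹ • (t • (ω : R3))) φ (t • (ω : R3))
        = fderiv ℝ φ (t • (ω : R3)) (ω : R3) := by
      rw [hnt, inv_smul_smul₀ htpos.ne', hdir]
    have hG2val : G2 (t • (ω : R3))
        = ((g2 t : ℝ) : ℂ) * (inner ℂ (φ (t • (ω : R3)))
            (fderiv ℝ φ (t • (ω : R3)) (ω : R3)) : ℂ) := by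
      rw [hG2def]
      simp only [hIPdef]
      rw [hnt, inv_smul_smul₀ htpos.ne', hdir]
    set w : ℝ := (inner ℂ (φ (t • (ω : R3)))
        (fderiv ℝ φ (t • (ω : R3)) (ω : R3)) : ℂ).re with hwdef
    have hre : (((g2 t : ℝ) : ℂ) * (inner ℂ (φ (t • (ω : R3)))
        (fderiv ℝ φ (t • (ω : R3)) (ω : R3)) : ℂ)).re = g2 t * w := by
      rw [Complex.mul_re]
      simp [hwdef]
    have hfinal : (t ^ 2 • G2 (t • (ω : R3))).re = t ^ 2 * (g2 t * w) := by
      rw [Complex.smul_re, hG2val, hre, smul_eq_mul]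
    rw [hfinal]
    show P t * (2 * w) = 2 * (t ^ 2 * ((t ^ 2)⁻¹ * P t * w))
    rw [show t ^ 2 * ((t ^ 2)⁻¹ * P t * w) = (t ^ 2 * (t ^ 2)⁻¹) * (P t * w) from by ring,
      mul_inv_cancel₀ (pow_ne_zero 2 htpos.ne'), one_mul]
    ring
  -- identify the given integrand with G2 a.e.
  have hGG2 : (∫ x : R3, ((g ‖x‖ : ℝ) : ℂ) *
      (inner ℂ (φ x) (dirDeriv (‖x‖⁻¹ • x) φ x) : ℂ)) = ∫ x : R3, G2 x := by
    refine integral_congr_ae ?_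
    have hne : ∀ᵐ x : R3, x ≠ (0:R3) := by
      refine (ae_iff).2 ?_
      have he : {x : R3 | ¬ x ≠ (0:R3)} = {(0:R3)} := by ext x; simp
      rw [he]
      exact measure_singleton 0
    filter_upwards [hne] with x hx
    have hnx : (0:ℝ) < ‖x‖ := norm_pos_iff.2 hx
    rw [hG2def]
    simp only [hIPdef]
    rw [hgg2 _ hnx]
  -- assemble everything
  calc ∫ x : R3, W ‖x‖ * ‖φ x‖ ^ 2
      = ∫ p : Metric.sphere (0:R3) 1 × Set.Ioi (0:ℝ),
          W ‖((p.2 : ℝ) • (p.1 : R3))‖ * ‖φ ((p.2 : ℝ) • (p.1 : R3))‖ ^ 2 ∂(μS.prod ν) :=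
        polar_integral (fun x : R3 => W ‖x‖ * ‖φ x‖ ^ 2)
    _ = ∫ ω, (∫ r : Set.Ioi (0:ℝ),
          W ‖((r : ℝ) • (ω : R3))‖ * ‖φ ((r : ℝ) • (ω : R3))‖ ^ 2 ∂ν) ∂μS :=
        integral_prod _ hFtransInt
    _ = ∫ ω, (-2 : ℝ) * (∫ r : Set.Ioi (0:ℝ), G2 ((r : ℝ) • (ω : R3)) ∂ν).re ∂μS :=
        integral_congr_ae hkey
    _ = (-2 : ℝ) * ∫ ω, (∫ r : Set.Ioi (0:ℝ), G2 ((r : ℝ) • (ω : R3)) ∂ν).re ∂μS :=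
        integral_const_mul _ _
    _ = (-2 : ℝ) * (∫ ω, (∫ r : Set.Ioi (0:ℝ), G2 ((r : ℝ) • (ω : R3)) ∂ν) ∂μS).re := by
        congr 1
        exact integral_re (hG2transInt.integral_prod_left)
    _ = (-2 : ℝ) * (∫ p : Metric.sphere (0:R3) 1 × Set.Ioi (0:ℝ),
          G2 ((p.2 : ℝ) • (p.1 : R3)) ∂(μS.prod ν)).re := by
        rw [← integral_prod _ hG2transInt]
    _ = (-2 : ℝ) * (∫ x : R3, G2 x).re := by
        rw [← polar_integral G2]
    _ = -2 * (∫ x : R3, ((g ‖x‖ : ℝ) : ℂ) *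
          (inner ℂ (φ x) (dirDeriv (‖x‖⁻¹ • x) φ x) : ℂ)).re := by
        rw [hGG2]
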